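/- Let M be an n×n matrix over RatFunc ℂ (n ≥ 1). Then every complex root of (det (M - X • 1)).num lies in the Gershgorin-type region Γ(M) of the polynomial extension of M; that is, for every λ₀ ∈ ℂ with (det (M - X • 1)).num.eval λ₀ = 0 there exists an index i such that ‖λ₀ - eval λ₀ (M̄ i i)‖ ≤ ∑_{j ≠ i} ‖eval λ₀ (M̄ i j)‖. -/

import Mathlib

set_option synthInstance.maxHeartbeats 1000000
set_option maxHeartbeats 1000000

open Matrix Polynomial

/-- The polynomial extension `M̄` of a matrix over `RatFunc ℂ`: with
`L i = ∏ j (M i j).denom`, set `M̄ i j = L i * M i j` off the diagonal and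
`M̄ i i = L i * (M i i - X) + X` on the diagonal. -/
theorem clearDenom (w : RatFunc ℂ) (p : ℂ[X]) (hp : w.denom ∣ p) :
    ∃ q : ℂ[X], algebraMap ℂ[X] (RatFunc ℂ) p * w = algebraMap _ _ q := by
  obtain ⟨c, hc⟩ := hp
  refine ⟨c * w.num, ?_⟩
  have hd : algebraMap ℂ[X] (RatFunc ℂ) w.denom ≠ 0 :=
    RatFunc.algebraMap_ne_zero w.denom_ne_zero
  rw [hc, _root_.map_mul, _root_.map_mul, mul_comm (algebraMap ℂ[X] (RatFunc ℂ) w.denom),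
    mul_assoc]
  congr 1
  exact (mul_comm _ _).trans ((div_eq_iff hd).mp (RatFunc.num_div_denom w)).symm

noncomputable def polyExt {α : Type} [Fintype α] [DecidableEq α]
    (M : Matrix α α (RatFunc ℂ)) : Matrix α α (RatFunc ℂ) :=
  Matrix.of fun i j =>
    if i = j then
      algebraMap (Polynomial ℂ) (RatFunc ℂ) (∏ k, (M i k).denom) * (M i i - RatFunc.X) +
        RatFunc.X
    else
      algebraMap (Polynomial ℂ) (RatFunc ℂ) (∏ k, (M i k).denom) * M i j

theorem spec_subset_gershgorin {n : ℕ} (hn : 1 ≤ n)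
    (M : Matrix (Fin n) (Fin n) (RatFunc ℂ)) (lam : ℂ)
    (h : (((M - (RatFunc.X : RatFunc ℂ) • 1).det).num).eval lam = 0) :
    ∃ i : Fin n,
      ‖lam - RatFunc.eval (RingHom.id ℂ) lam (polyExt M i i)‖ ≤
        ∑ j ∈ Finset.univ.erase i, ‖RatFunc.eval (RingHom.id ℂ) lam (polyExt M i j)‖ := by
  classical
  set N : Matrix (Fin n) (Fin n) (RatFunc ℂ) := M - (RatFunc.X : RatFunc ℂ) • 1 with hNdef
  -- each row-cleared entry is a polynomial
  have key : ∀ i j : Fin n, ∃ q : ℂ[X],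
      algebraMap ℂ[X] (RatFunc ℂ) (∏ k, (M i k).denom) * N i j = algebraMap _ _ q := by
    intro i j
    apply clearDenom
    have h1 : (M i j).denom ∣ ∏ k, (M i k).denom :=
      Finset.dvd_prod_of_mem _ (Finset.mem_univ j)
    have h2 : (N i j).denom ∣ (M i j).denom := by
      by_cases hij : i = j
      · subst hij
        have : N i i = M i i + (-(RatFunc.X : RatFunc ℂ)) := by
          simp [hNdef, sub_eq_add_neg]
        have hX : (-(RatFunc.X : RatFunc ℂ)) = algebraMap ℂ[X] (RatFunc ℂ) (-X) := by
          simp [RatFunc.algebraMap_X]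
        rw [this, hX]
        have := RatFunc.denom_add_dvd (M i i) (algebraMap ℂ[X] (RatFunc ℂ) (-X))
        rwa [RatFunc.denom_algebraMap, mul_one] at this
      · have : N i j = M i j := by simp [hNdef, Matrix.one_apply_ne hij]
        rw [this]
    exact h2.trans h1
  choose Q hQ using key
  -- entries of polyExt in terms of Q
  have hP : ∀ i j : Fin n, polyExt M i j =
      algebraMap ℂ[X] (RatFunc ℂ) (Q i j + if i = j then X else 0) := by
    intro i j
    by_cases hij : i = j
    · subst hij
      have hNii : N i i = M i i - RatFunc.X := by simp [hNdef]
      simp only [polyExt, Matrix.of_apply, if_pos rfl, eq_self_iff_true, if_true, map_add,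
        RatFunc.algebraMap_X]
      rw [← hQ i i, hNii]
    · simp only [polyExt, Matrix.of_apply, if_neg hij, map_add, map_zero, add_zero]
      rw [← hQ i j]
      congr 1
      simp [hNdef, Matrix.one_apply_ne hij]
  -- evaluated matrix
  set A : Matrix (Fin n) (Fin n) ℂ :=
    Matrix.of fun i j => (Q i j).eval lam + if i = j then lam else 0 with hAdef
  have hEval : ∀ i j : Fin n,
      RatFunc.eval (RingHom.id ℂ) lam (polyExt M i j) = A i j := by
    intro i j
    rw [hP i j, RatFunc.eval_algebraMap]
    simp [hAdef, apply_ite (Polynomial.eval lam)]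
  -- determinant identity
  have hdet : algebraMap ℂ[X] (RatFunc ℂ) (Matrix.of Q).det =
      algebraMap ℂ[X] (RatFunc ℂ) (∏ i, ∏ k, (M i k).denom) * N.det := by
    have hmap : (Matrix.of Q).map (algebraMap ℂ[X] (RatFunc ℂ)) =
        Matrix.diagonal (fun i => algebraMap ℂ[X] (RatFunc ℂ) (∏ k, (M i k).denom)) * N := by
      ext i j
      rw [Matrix.map_apply, Matrix.of_apply, Matrix.diagonal_mul]
      exact (hQ i j).symm
    rw [RingHom.map_det, RingHom.mapMatrix_apply, hmap, Matrix.det_mul, Matrix.det_diagonal, ← map_prod]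
  have hpoly : (Matrix.of Q).det * (N.det).denom =
      (∏ i, ∏ k, (M i k).denom) * (N.det).num := by
    apply RatFunc.algebraMap_injective
    rw [_root_.map_mul, _root_.map_mul, hdet, mul_assoc]
    congr 1
    have hnd := (div_eq_iff (RatFunc.algebraMap_ne_zero (N.det).denom_ne_zero)).mp
      (RatFunc.num_div_denom N.det)
    rw [hnd]
  have hdenom_ne : ((N.det).denom).eval lam ≠ 0 := by
    intro h0
    obtain ⟨a, b, hab⟩ := RatFunc.isCoprime_num_denom N.det
    have := congrArg (Polynomial.eval lam) hab
    simp [h, h0] at this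
  have hQ0 : ((Matrix.of Q).det).eval lam = 0 := by
    have := congrArg (Polynomial.eval lam) hpoly
    simp only [Polynomial.eval_mul, h, mul_zero] at this
    exact (mul_eq_zero.mp this).resolve_right hdenom_ne
  -- lam is an eigenvalue of A
  have hdet0 : (A - lam • 1).det = 0 := by
    have hmap : (Matrix.of Q).map (Polynomial.eval lam) = A - lam • 1 := by
      ext i j
      by_cases hij : i = j <;>
        simp [hAdef, Matrix.one_apply, hij]
    have := (Polynomial.evalRingHom lam).map_det (Matrix.of Q)
    rw [RingHom.mapMatrix_apply] at this
    rw [← hmap, ← Polynomial.coe_evalRingHom, ← this]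
    simpa using hQ0
  obtain ⟨v, hv0, hv⟩ := (Matrix.exists_mulVec_eq_zero_iff).mpr hdet0
  have hev : Matrix.toLin' A v = lam • v := by
    rw [Matrix.toLin'_apply]
    have : A.mulVec v - lam • v = 0 := by
      rw [← hv, Matrix.sub_mulVec, Matrix.smul_mulVec, Matrix.one_mulVec]
    exact sub_eq_zero.mp this
  have heig : Module.End.HasEigenvalue (Matrix.toLin' A) lam :=
    Module.End.hasEigenvalue_of_hasEigenvector
      ⟨Module.End.mem_eigenspace_iff.mpr hev, hv0⟩
  obtain ⟨k, hk⟩ := eigenvalue_mem_ball heig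
  refine ⟨k, ?_⟩
  rw [Metric.mem_closedBall, dist_eq_norm] at hk
  simp only [hEval]
  exact hk
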